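/- The function w₂ satisfies −w₂''(x) + w₂(x) − p w(x)^{p−1} w₂(x) = w(x) for every x ∈ ℝ. -/

import Mathlib

open Real

/-- The function `w₂(x) = −w(x)/(p−1) − (1/2) x w'(x)` satisfies
`−w₂'' + w₂ − p w^(p−1) w₂ = w` on `ℝ`. -/
theorem w2_solves_linearized_equation
    (p : ℝ) (hp : 1 < p) (w : ℝ → ℝ)
    (hw_pos : ∀ x, 0 < w x)
    (hw_smooth : ContDiff ℝ 2 w)
    (hw_eq : ∀ x, deriv (deriv w) x - w x + w x ^ p = 0)
    (hdecay : ∃ C₀ > (0:ℝ), ∃ a > (0:ℝ),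
      ∀ x : ℝ, w x + |deriv w x| ≤ C₀ * Real.exp (-a * |x|))
    (w₂ : ℝ → ℝ)
    (hw₂ : w₂ = fun x => -(w x) / (p - 1) - (1 / 2) * x * deriv w x) :
    ∀ x : ℝ,
      -(deriv (deriv w₂) x) + w₂ x - p * w x ^ (p - 1) * w₂ x = w x := by
  have hdiff : Differentiable ℝ w := hw_smooth.differentiable (by norm_num)
  have hD1 : ∀ x, HasDerivAt w (deriv w x) x := fun x => (hdiff x).hasDerivAt
  have hw1 : ContDiff ℝ 1 (deriv w) := by
    have := (contDiff_succ_iff_deriv (n := 1)).mp (by exact_mod_cast hw_smooth)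
    exact this.2.2
  have hdiff1 : Differentiable ℝ (deriv w) := hw1.differentiable (by norm_num)
  have hD2 : ∀ x, HasDerivAt (deriv w) (deriv (deriv w) x) x :=
    fun x => (hdiff1 x).hasDerivAt
  have hW2 : deriv (deriv w) = fun x => w x - w x ^ p := by
    funext x; have := hw_eq x; linarith
  have hD3 : ∀ x, HasDerivAt (deriv (deriv w))
      (deriv w x - p * w x ^ (p - 1) * deriv w x) x := by
    intro x
    rw [hW2]
    have h1 := (hD1 x).rpow_const (p := p) (Or.inl (hw_pos x).ne')
    have := (hD1 x).sub h1
    refine this.congr_deriv ?_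
    ring
  have hDw2 : ∀ x, HasDerivAt w₂
      (-(deriv w x) / (p - 1) -
        ((1 / 2) * deriv w x + (1 / 2) * x * deriv (deriv w) x)) x := by
    intro x
    rw [hw₂]
    have h1 : HasDerivAt (fun x => -(w x) / (p - 1)) (-(deriv w x) / (p - 1)) x :=
      (hD1 x).neg.div_const _
    have h2 : HasDerivAt (fun x => (1 / 2) * x * deriv w x)
        ((1 / 2) * deriv w x + (1 / 2) * x * deriv (deriv w) x) x := by
      have := ((hasDerivAt_id x).const_mul (1 / 2 : ℝ)).mul (hD2 x)
      refine this.congr_deriv ?_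
      simp only [id_eq]; ring
    exact h1.sub h2
  have hDw2' : deriv w₂ = fun x =>
      -(deriv w x) / (p - 1) -
        ((1 / 2) * deriv w x + (1 / 2) * x * deriv (deriv w) x) := by
    funext x; exact (hDw2 x).deriv
  have hDDw2 : ∀ x, deriv (deriv w₂) x =
      -(deriv (deriv w) x) / (p - 1) -
        ((1 / 2) * deriv (deriv w) x +
          ((1 / 2) * deriv (deriv w) x +
            (1 / 2) * x * (deriv w x - p * w x ^ (p - 1) * deriv w x))) := by
    intro x
    rw [hDw2']
    have h1 : HasDerivAt (fun x => -(deriv w x) / (p - 1))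
        (-(deriv (deriv w) x) / (p - 1)) x := (hD2 x).neg.div_const _
    have h2 : HasDerivAt (fun x => (1 / 2) * deriv w x)
        ((1 / 2) * deriv (deriv w) x) x := (hD2 x).const_mul _
    have h3 : HasDerivAt (fun x => (1 / 2) * x * deriv (deriv w) x)
        ((1 / 2) * deriv (deriv w) x +
          (1 / 2) * x * (deriv w x - p * w x ^ (p - 1) * deriv w x)) x := by
      have := ((hasDerivAt_id x).const_mul (1 / 2 : ℝ)).mul (hD3 x)
      refine this.congr_deriv ?_
      simp only [id_eq]; ring
    exact (h1.sub (h2.add h3)).deriv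
  intro x
  rw [hDDw2 x, hw₂]
  simp only [hW2]
  have hpow : w x ^ (p - 1) * w x = w x ^ p := by
    rw [← Real.rpow_add_one (hw_pos x).ne' (p - 1)]
    ring_nf
  have hp1 : p - 1 ≠ 0 := by intro h; linarith [hp]
  field_simp
  rw [← hpow]
  ring
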